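/- Let X be a compact metric space, f : X → 2^X an open set-valued map, and C ⊆ X a nonempty connected open set with f(C) ⊆ C. If the restriction of f to C is transitive (for all nonempty open A, B ⊆ C there exists n with fⁿ(A) ∩ B ≠ ∅), then the restriction of f to C is mixing (there exists n₀ with fⁿ(A) ∩ B ≠ ∅ for all n ≥ n₀). -/
import Mathlib


open Metric Set

/-- n-fold relational composition: `fIter f 0 x = {x}`, `fIter f (n+1) x = ⋃ y ∈ fIter f n x, f y`. -/
def fIter {X : Type*} (f : X → Set X) : ℕ → X → Set X
  | 0, x => {x}
  | n + 1, x => ⋃ y ∈ fIter f n x, f y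

/-- Image of a set under the n-fold composition. -/
def fIterS {X : Type*} (f : X → Set X) (n : ℕ) (A : Set X) : Set X :=
  ⋃ a ∈ A, fIter f n a

/-- `x ⇝ y`: there is a finite trajectory of length ≥ 1 from `x` to `y`. -/
def Reach {X : Type*} (f : X → Set X) (x y : X) : Prop :=
  ∃ n, 1 ≤ n ∧ y ∈ fIter f n x

/-- The recurrent set `Ω(f)`. -/
def Omega {X : Type*} (f : X → Set X) : Set X := {x | Reach f x x}

/-- The final recurrent set `Ω_final(f)`. -/
def OmegaFinal {X : Type*} (f : X → Set X) : Set X :=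
  {x | ∀ y, Reach f x y → Reach f y x}

/-- `f` is an open set-valued map: open graph and nonempty open connected values. -/
def IsOpenSVM {X : Type*} [TopologicalSpace X] (f : X → Set X) : Prop :=
  IsOpen {p : X × X | p.2 ∈ f p.1} ∧ ∀ x, IsOpen (f x) ∧ IsConnected (f x)

/-- `f` is transitive. -/
def SVMTransitive {X : Type*} [TopologicalSpace X] (f : X → Set X) : Prop :=
  ∀ A B : Set X, IsOpen A → A.Nonempty → IsOpen B → B.Nonempty →
    ∃ n, 1 ≤ n ∧ (fIterS f n A ∩ B).Nonempty

section AuxMix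
variable {X : Type*}

lemma fIter_one (f : X → Set X) (x : X) : fIter f 1 x = f x := by
  simp [fIter]

lemma mem_fIter_succ {f : X → Set X} {n : ℕ} {x z : X} :
    z ∈ fIter f (n + 1) x ↔ ∃ y ∈ fIter f n x, z ∈ f y := by
  simp [fIter]

lemma mem_fIterS {f : X → Set X} {n : ℕ} {A : Set X} {z : X} :
    z ∈ fIterS f n A ↔ ∃ a ∈ A, z ∈ fIter f n a := by
  simp [fIterS]

lemma fIter_comp {f : X → Set X} {a : ℕ} {x y : X} :
    ∀ {b : ℕ} {z : X}, y ∈ fIter f a x → z ∈ fIter f b y → z ∈ fIter f (a + b) x := by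
  intro b
  induction b with
  | zero => intro z hy hz; simp only [fIter, mem_singleton_iff] at hz; subst hz; exact hy
  | succ b ih =>
    intro z hy hz
    rw [mem_fIter_succ] at hz
    obtain ⟨u, hu, hzu⟩ := hz
    show z ∈ fIter f ((a + b) + 1) x
    exact mem_fIter_succ.2 ⟨u, ih hy hu, hzu⟩

lemma fIter_nonempty {f : X → Set X} (hne : ∀ x, (f x).Nonempty) :
    ∀ (n : ℕ) (x : X), (fIter f n x).Nonempty := by
  intro n
  induction n with
  | zero => intro x; exact ⟨x, rfl⟩
  | succ n ih =>
    intro x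
    obtain ⟨y, hy⟩ := ih x
    obtain ⟨z, hz⟩ := hne y
    exact ⟨z, mem_fIter_succ.2 ⟨y, hy, hz⟩⟩

lemma fIter_rect [TopologicalSpace X] {f : X → Set X}
    (hg : IsOpen {p : X × X | p.2 ∈ f p.1}) :
    ∀ {n : ℕ} {x y : X}, y ∈ fIter f (n + 1) x →
      ∃ U V : Set X, IsOpen U ∧ IsOpen V ∧ x ∈ U ∧ y ∈ V ∧
        ∀ u ∈ U, ∀ v ∈ V, v ∈ fIter f (n + 1) u := by
  intro n
  induction n with
  | zero =>
    intro x y hy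
    rw [fIter_one] at hy
    obtain ⟨U, V, hU, hV, hxU, hyV, hUV⟩ := isOpen_prod_iff.1 hg x y hy
    exact ⟨U, V, hU, hV, hxU, hyV, fun u hu v hv =>
      (fIter_one f u).symm ▸ hUV (show (u, v) ∈ U ×ˢ V from ⟨hu, hv⟩)⟩
  | succ n ih =>
    intro x y hy
    obtain ⟨w, hw, hyw⟩ := mem_fIter_succ.1 hy
    obtain ⟨U₁, V₁, hU₁, hV₁, hxU₁, hwV₁, h₁⟩ := ih hw
    obtain ⟨U₂, V₂, hU₂, hV₂, hwU₂, hyV₂, h₂⟩ := isOpen_prod_iff.1 hg w y hyw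
    refine ⟨U₁, V₂, hU₁, hV₂, hxU₁, hyV₂, fun u hu v hv => ?_⟩
    exact mem_fIter_succ.2 ⟨w, h₁ u hu w hwV₁,
      h₂ (show (w, v) ∈ U₂ ×ˢ V₂ from ⟨hwU₂, hv⟩)⟩

lemma semi_mul {S : Set ℕ} (hadd : ∀ m ∈ S, ∀ n ∈ S, m + n ∈ S) {a : ℕ} (ha : a ∈ S) :
    ∀ k : ℕ, 1 ≤ k → k * a ∈ S := by
  intro k
  induction k with
  | zero => omega
  | succ k ih =>
    intro _
    rcases Nat.eq_zero_or_pos k with hk | hk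
    · subst hk; simpa using ha
    · have := hadd _ (ih hk) _ ha
      convert this using 1
      ring

lemma semi_cofinite {S : Set ℕ} (hadd : ∀ m ∈ S, ∀ n ∈ S, m + n ∈ S)
    {b : ℕ} (hb1 : 1 ≤ b) (hb : b ∈ S) (hb' : b + 1 ∈ S) :
    ∀ n, b * b ≤ n → n ∈ S := by
  intro n
  induction n using Nat.strong_induction_on with
  | _ n ih =>
    intro hn
    by_cases h : n < b * b + b
    · set j := n - b * b with hj
      have hjb : j < b := by omega
      have hn' : n = (b - j) * b + j * (b + 1) := by
        have e1 : (b - j) * b = b * b - j * b := by rw [Nat.sub_mul]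
        have e2 : j * (b + 1) = j * b + j := by ring
        have e3 : j * b ≤ b * b := Nat.mul_le_mul (le_of_lt hjb) le_rfl
        omega
      rcases Nat.eq_zero_or_pos j with h0 | h0
      · have hnb : n = b * b := by omega
        rw [hnb]
        exact semi_mul hadd hb b hb1
      · rw [hn']
        exact hadd _ (semi_mul hadd hb (b - j) (by omega)) _ (semi_mul hadd hb' j h0)
    · have h1 : n - b < n := by omega
      have h2 : b * b ≤ n - b := by omega
      have := hadd _ (ih _ h1 h2) _ hb
      convert this using 1
      omega

end AuxMix


theorem stmt_15 {X : Type*} [MetricSpace X] [CompactSpace X] (f : X → Set X)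
    (hf : IsOpenSVM f) (C : Set X) (hCne : C.Nonempty) (hCconn : IsConnected C)
    (hCopen : IsOpen C) (hinv : (⋃ c ∈ C, f c) ⊆ C)
    (htrans : ∀ A B : Set X, A ⊆ C → B ⊆ C → IsOpen A → A.Nonempty →
      IsOpen B → B.Nonempty → ∃ n, 1 ≤ n ∧ (fIterS f n A ∩ B).Nonempty) :
    ∀ A B : Set X, A ⊆ C → B ⊆ C → IsOpen A → A.Nonempty →
      IsOpen B → B.Nonempty → ∃ n₀, ∀ n ≥ n₀, (fIterS f n A ∩ B).Nonempty := by
  have hgraph := hf.1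
  have hne : ∀ x, (f x).Nonempty := fun x => (hf.2 x).2.nonempty
  have hfc : ∀ c ∈ C, f c ⊆ C := fun c hc y hy => hinv (mem_iUnion₂.2 ⟨c, hc, hy⟩)
  -- Step 1: construct W, N with W ⊆ fIter f N w for all w ∈ W
  obtain ⟨W, N, hWo, hWne, hWC, hN1, hWN⟩ :
      ∃ (W : Set X) (N : ℕ), IsOpen W ∧ W.Nonempty ∧ W ⊆ C ∧ 1 ≤ N ∧
        ∀ w ∈ W, W ⊆ fIter f N w := by
    obtain ⟨n₁, hn₁, z, hz1, hz2⟩ := htrans C C Subset.rfl Subset.rfl hCopen hCne hCopen hCne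
    obtain ⟨a, ha, hza⟩ := mem_fIterS.1 hz1
    obtain ⟨k₁, rfl⟩ : ∃ k, n₁ = k + 1 := ⟨n₁ - 1, by omega⟩
    obtain ⟨U₁, V₁, hU₁, hV₁, haU₁, hzV₁, h₁⟩ := fIter_rect hgraph hza
    have hV₁ne : (V₁ ∩ C).Nonempty := ⟨z, hzV₁, hz2⟩
    have hU₁ne : (U₁ ∩ C).Nonempty := ⟨a, haU₁, ha⟩
    obtain ⟨n₂, hn₂, q, hq1, hq2⟩ := htrans (V₁ ∩ C) (U₁ ∩ C) inter_subset_right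
      inter_subset_right (hV₁.inter hCopen) hV₁ne (hU₁.inter hCopen) hU₁ne
    obtain ⟨p, hp, hqp⟩ := mem_fIterS.1 hq1
    obtain ⟨k₂, rfl⟩ : ∃ k, n₂ = k + 1 := ⟨n₂ - 1, by omega⟩
    obtain ⟨U₂, V₂, hU₂, hV₂, hpU₂, hqV₂, h₂⟩ := fIter_rect hgraph hqp
    refine ⟨U₂ ∩ (V₁ ∩ C), (k₂ + 1) + (k₁ + 1),
      hU₂.inter (hV₁.inter hCopen), ⟨p, hpU₂, hp⟩,
      inter_subset_right.trans inter_subset_right, by omega, ?_⟩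
    rintro w ⟨hwU₂, hwV₁, hwC⟩ w' ⟨hw'U₂, hw'V₁, hw'C⟩
    have hq3 : q ∈ fIter f (k₂ + 1) w := h₂ w hwU₂ q hqV₂
    have hw'4 : w' ∈ fIter f (k₁ + 1) q := h₁ q hq2.1 w' hw'V₁
    exact fIter_comp hq3 hw'4
  -- T(x) nonempty: every point of C reaches W
  have hT : ∀ x ∈ C, ∃ n, 1 ≤ n ∧ (fIter f n x ∩ W).Nonempty := by
    intro x hx
    obtain ⟨m, hm, z, hz1, hz2⟩ := htrans (f x) W (hfc x hx) hWC (hf.2 x).1 (hne x) hWo hWne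
    obtain ⟨y, hy, hzy⟩ := mem_fIterS.1 hz1
    have hy1 : y ∈ fIter f 1 x := by rw [fIter_one]; exact hy
    exact ⟨1 + m, by omega, z, fIter_comp hy1 hzy, hz2⟩
  -- the return-time semigroup S
  set S : Set ℕ := {n | 1 ≤ n ∧ ∀ w ∈ W, (fIter f n w ∩ W).Nonempty} with hSdef
  have hmemS : ∀ n : ℕ, n ∈ S ↔ 1 ≤ n ∧ ∀ w ∈ W, (fIter f n w ∩ W).Nonempty := by
    intro n; rw [hSdef]; rfl
  have hSadd : ∀ m ∈ S, ∀ n ∈ S, m + n ∈ S := by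
    intro m hm n hn
    obtain ⟨hm1, hm2⟩ := (hmemS m).1 hm
    obtain ⟨hn1, hn2⟩ := (hmemS n).1 hn
    refine (hmemS _).2 ⟨by omega, fun w hw => ?_⟩
    obtain ⟨u, hu, huW⟩ := hm2 w hw
    obtain ⟨v, hv, hvW⟩ := hn2 u huW
    exact ⟨v, fIter_comp hu hv, hvW⟩
  have hNS : N ∈ S := by
    refine (hmemS N).2 ⟨hN1, fun w hw => ?_⟩
    obtain ⟨u, hu⟩ := hWne
    exact ⟨u, hWN w hw hu, hu⟩
  -- the group-like difference set G
  set G : Set ℤ := {z | ∃ a b : ℕ, (a ∈ S ∨ a = 0) ∧ (b ∈ S ∨ b = 0) ∧ z = (a : ℤ) - b}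
    with hGdef
  have hG0 : (0 : ℤ) ∈ G := ⟨0, 0, Or.inr rfl, Or.inr rfl, by simp⟩
  have hball : ∀ a b : ℕ, (a ∈ S ∨ a = 0) → (b ∈ S ∨ b = 0) → (a + b ∈ S ∨ a + b = 0) := by
    rintro a b (ha | rfl) (hb | rfl)
    · exact Or.inl (hSadd _ ha _ hb)
    · simpa using Or.inl ha
    · simpa using Or.inl hb
    · simp
  have hGsub : ∀ z₁ ∈ G, ∀ z₂ ∈ G, z₁ - z₂ ∈ G := by
    rintro _ ⟨a, b, ha, hb, rfl⟩ _ ⟨c, d, hc, hd, rfl⟩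
    exact ⟨a + d, b + c, hball a d ha hd, hball b c hb hc, by push_cast; ring⟩
  -- well-definedness: two return times from the same point differ by an element of G
  have hWD : ∀ x ∈ C, ∀ n, 1 ≤ n → (fIter f n x ∩ W).Nonempty →
      ∀ n', 1 ≤ n' → (fIter f n' x ∩ W).Nonempty → ((n : ℤ) - n') ∈ G := by
    intro x hx n hn hTn n' hn' hTn'
    obtain ⟨w, hwn, hwW⟩ := hTn
    obtain ⟨w', hw'n, hw'W⟩ := hTn'
    obtain ⟨k, rfl⟩ : ∃ k, n = k + 1 := ⟨n - 1, by omega⟩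
    obtain ⟨k', rfl⟩ : ∃ k, n' = k + 1 := ⟨n' - 1, by omega⟩
    obtain ⟨U₁, V₁, hU₁, hV₁, hxU₁, hwV₁, h₁⟩ := fIter_rect hgraph hwn
    obtain ⟨U₂, V₂, hU₂, hV₂, hxU₂, hw'V₂, h₂⟩ := fIter_rect hgraph hw'n
    have hVo : IsOpen (U₁ ∩ U₂ ∩ C) := (hU₁.inter hU₂).inter hCopen
    obtain ⟨m, hm, v, hv1, hv2⟩ := htrans W (U₁ ∩ U₂ ∩ C) hWC inter_subset_right
      hWo hWne hVo ⟨x, ⟨hxU₁, hxU₂⟩, hx⟩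
    obtain ⟨w₁, hw₁W, hvw₁⟩ := mem_fIterS.1 hv1
    have key : ∀ (j : ℕ) (t : X), (∀ p ∈ U₁ ∩ U₂ ∩ C, t ∈ fIter f j p) → t ∈ W →
        (N + m + j) ∈ S := by
      intro j t ht htW
      refine (hmemS _).2 ⟨by omega, fun u hu => ?_⟩
      have h1 : w₁ ∈ fIter f N u := hWN u hu hw₁W
      have h2 : v ∈ fIter f (N + m) u := fIter_comp h1 hvw₁
      exact ⟨t, fIter_comp h2 (ht v hv2), htW⟩
    have s1 : N + m + (k + 1) ∈ S := key (k + 1) w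
      (fun p hp => h₁ p hp.1.1 w hwV₁) hwW
    have s2 : N + m + (k' + 1) ∈ S := key (k' + 1) w'
      (fun p hp => h₂ p hp.1.2 w' hw'V₂) hw'W
    exact ⟨N + m + (k + 1), N + m + (k' + 1), Or.inl s1, Or.inl s2, by push_cast; ring⟩
  -- constancy over the connected set C
  have hCONST : ∀ x₁ ∈ C, ∀ n₁, 1 ≤ n₁ → (fIter f n₁ x₁ ∩ W).Nonempty →
      ∀ x₂ ∈ C, ∀ n₂, 1 ≤ n₂ → (fIter f n₂ x₂ ∩ W).Nonempty → ((n₂ : ℤ) - n₁) ∈ G := by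
    intro x₁ hx₁ n₁ hn₁ hT₁ x₂ hx₂ n₂ hn₂ hT₂
    by_contra hcon
    classical
    set u : Set X := {x | ∃ n, 1 ≤ n ∧ (fIter f n x ∩ W).Nonempty ∧ ((n : ℤ) - n₁) ∈ G}
      with hudef
    set v : Set X := {x | ∃ n, 1 ≤ n ∧ (fIter f n x ∩ W).Nonempty ∧ ((n : ℤ) - n₁) ∉ G}
      with hvdef
    have hopen : ∀ (P : ℤ → Prop),
        IsOpen {x | ∃ n, 1 ≤ n ∧ (fIter f n x ∩ W).Nonempty ∧ P ((n : ℤ) - n₁)} := by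
      intro P
      rw [isOpen_iff_forall_mem_open]
      rintro x ⟨n, hn1, ⟨w, hwn, hwW⟩, hP⟩
      obtain ⟨k, rfl⟩ : ∃ k, n = k + 1 := ⟨n - 1, by omega⟩
      obtain ⟨U, V, hU, hV, hxU, hwV, h⟩ := fIter_rect hgraph hwn
      exact ⟨U, fun x' hx' => ⟨k + 1, by omega, ⟨w, h x' hx' w hwV, hwW⟩, hP⟩, hU, hxU⟩
    have hou : IsOpen u := by rw [hudef]; exact hopen fun z => z ∈ G
    have hov : IsOpen v := by rw [hvdef]; exact hopen fun z => z ∉ G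
    have hcover : C ⊆ u ∪ v := by
      intro x hx
      obtain ⟨n, hn1, hTn⟩ := hT x hx
      by_cases hg : ((n : ℤ) - n₁) ∈ G
      · exact Or.inl ⟨n, hn1, hTn, hg⟩
      · exact Or.inr ⟨n, hn1, hTn, hg⟩
    have hx₁u : x₁ ∈ u := ⟨n₁, hn₁, hT₁, by simpa using hG0⟩
    have hx₂v : x₂ ∈ v := ⟨n₂, hn₂, hT₂, hcon⟩
    obtain ⟨x, hxC, hxu, hxv⟩ := hCconn.2 u v hou hov hcover ⟨x₁, hx₁, hx₁u⟩ ⟨x₂, hx₂, hx₂v⟩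
    obtain ⟨n, hn1, hTn, hnG⟩ := hxu
    obtain ⟨n', hn'1, hTn', hn'G⟩ := hxv
    apply hn'G
    have hd : ((n : ℤ) - n') ∈ G := hWD x hxC n hn1 hTn n' hn'1 hTn'
    have e : ((n' : ℤ) - n₁) = ((n : ℤ) - n₁) - ((n : ℤ) - n') := by ring
    rw [e]
    exact hGsub _ hnG _ hd
  -- 1 ∈ G
  have h1G : (1 : ℤ) ∈ G := by
    obtain ⟨w₀, hw₀⟩ := hWne
    obtain ⟨y₀, hy₀⟩ := hne w₀
    have hw₀C : w₀ ∈ C := hWC hw₀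
    have hy₀C : y₀ ∈ C := hfc w₀ hw₀C hy₀
    obtain ⟨k, hk1, hkT⟩ := hT y₀ hy₀C
    have hkT' : (fIter f (1 + k) w₀ ∩ W).Nonempty := by
      obtain ⟨z, hz, hzW⟩ := hkT
      have hy1 : y₀ ∈ fIter f 1 w₀ := by rw [fIter_one]; exact hy₀
      exact ⟨z, fIter_comp hy1 hz, hzW⟩
    have h := hCONST y₀ hy₀C k hk1 hkT w₀ hw₀C (1 + k) (by omega) hkT'
    have e : ((1 + k : ℕ) : ℤ) - (k : ℕ) = 1 := by push_cast; ring
    rwa [e] at h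
  -- extract b, b+1 ∈ S
  obtain ⟨p, hp1, hpS, hpS'⟩ : ∃ p, 1 ≤ p ∧ p ∈ S ∧ p + 1 ∈ S := by
    obtain ⟨a, b, ha, hb, hab⟩ := h1G
    have hab' : a = b + 1 := by omega
    rcases hb with hb | rfl
    · rcases ha with ha | rfl
      · exact ⟨b, ((hmemS b).1 hb).1, hb, hab' ▸ ha⟩
      · omega
    · rcases ha with ha | ha
      · have h1S : (1 : ℕ) ∈ S := by rwa [hab'] at ha
        exact ⟨1, le_rfl, h1S, hSadd _ h1S _ h1S⟩
      · omega
  have hcof : ∀ n, p * p ≤ n → n ∈ S := semi_cofinite hSadd hp1 hpS hpS'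
  obtain ⟨q, hq⟩ : ∃ q, q = p * p := ⟨_, rfl⟩
  -- final assembly
  intro A B hAC hBC hAo hAne hBo hBne
  obtain ⟨nA, hnA, zA, hzA1, hzA2⟩ := htrans A W hAC hWC hAo hAne hWo hWne
  obtain ⟨a, haA, hzAa⟩ := mem_fIterS.1 hzA1
  obtain ⟨mB, hmB, zB, hzB1, hzB2⟩ := htrans W B hWC hBC hWo hWne hBo hBne
  obtain ⟨wB, hwBW, hzBw⟩ := mem_fIterS.1 hzB1
  refine ⟨nA + q + N + mB, fun n hn => ?_⟩
  have hsS : (n - nA - N - mB) ∈ S := hcof _ (by omega)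
  obtain ⟨w', hw', hw'W⟩ := ((hmemS _).1 hsS).2 zA hzA2
  have c1 : w' ∈ fIter f (nA + (n - nA - N - mB)) a := fIter_comp hzAa hw'
  have c2 : wB ∈ fIter f ((nA + (n - nA - N - mB)) + N) a :=
    fIter_comp c1 (hWN w' hw'W hwBW)
  have c3 : zB ∈ fIter f (((nA + (n - nA - N - mB)) + N) + mB) a := fIter_comp c2 hzBw
  have hn' : ((nA + (n - nA - N - mB)) + N) + mB = n := by omega
  exact ⟨zB, mem_fIterS.2 ⟨a, haA, hn' ▸ c3⟩, hzB2⟩
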